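/- arXiv:2011.10234 — 3 statements merged into one kernel-verified Lean document; each statement's English description precedes it below -/
import Mathlib

section
/- For D ≥ 4, k = -1, and Q ≠ 0 with M = 0, the unique positive solution of -r^(2(D-3)) + (D-2)·Q^2 = 0 is r_p^(D-3) = √(D-2)·|Q|, and at this radius V''(r_p) = 4(D-3)/r_p^4 > 0. -/
lemma dV1 (C Q : ℝ) (m : ℕ) (x : ℝ) (hx : x ≠ 0) :
    HasDerivAt (fun s : ℝ => C - 1/s^2 + Q^2/s^m)
      (2*x^(-3:ℤ) - (m:ℝ)*Q^2*x^(-(m:ℤ)-1)) x := by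
  have hfun : (fun s : ℝ => C - 1/s^2 + Q^2/s^m)
      = (fun s : ℝ => C - s^(-2:ℤ) + Q^2 * s^(-(m:ℤ))) := by
    funext s
    simp [zpow_neg, div_eq_mul_inv]
  rw [hfun]
  have h1 : HasDerivAt (fun s : ℝ => s^(-2:ℤ)) ((-2:ℤ) * x^(-3:ℤ)) x := by
    simpa using hasDerivAt_zpow (-2) x (Or.inl hx)
  have h2 : HasDerivAt (fun s : ℝ => s^(-(m:ℤ))) (((-(m:ℤ)):ℝ) * x^(-(m:ℤ)-1)) x := by
    simpa using hasDerivAt_zpow (-(m:ℤ)) x (Or.inl hx)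
  have := ((hasDerivAt_const x C).sub h1).add (h2.const_mul (Q^2))
  refine this.congr_deriv ?_
  push_cast
  ring

lemma dV2 (Q : ℝ) (m : ℕ) (x : ℝ) (hx : x ≠ 0) :
    HasDerivAt (fun s : ℝ => 2*s^(-3:ℤ) - (m:ℝ)*Q^2*s^(-(m:ℤ)-1))
      (-6*x^(-4:ℤ) + (m:ℝ)*((m:ℝ)+1)*Q^2*x^(-(m:ℤ)-2)) x := by
  have h1 : HasDerivAt (fun s : ℝ => s^(-3:ℤ)) (((-3:ℤ):ℝ) * x^(-4:ℤ)) x := by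
    simpa using hasDerivAt_zpow (-3) x (Or.inl hx)
  have h2 : HasDerivAt (fun s : ℝ => s^(-(m:ℤ)-1)) (((-(m:ℤ)-1:ℤ):ℝ) * x^(-(m:ℤ)-2)) x := by
    have := hasDerivAt_zpow (-(m:ℤ)-1) x (Or.inl hx)
    rwa [show -(m:ℤ)-1-1 = -(m:ℤ)-2 by ring] at this
  have := (h1.const_mul 2).sub (h2.const_mul ((m:ℝ)*Q^2))
  refine this.congr_deriv ?_
  push_cast
  ring

lemma ddV (C Q : ℝ) (m : ℕ) (x : ℝ) (hx : 0 < x) :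
    deriv (deriv (fun s : ℝ => C - 1/s^2 + Q^2/s^m)) x
      = -6*x^(-4:ℤ) + (m:ℝ)*((m:ℝ)+1)*Q^2*x^(-(m:ℤ)-2) := by
  have hev : deriv (fun s : ℝ => C - 1/s^2 + Q^2/s^m)
      =ᶠ[nhds x] (fun s : ℝ => 2*s^(-3:ℤ) - (m:ℝ)*Q^2*s^(-(m:ℤ)-1)) := by
    filter_upwards [eventually_ne_nhds hx.ne'] with s hs
    exact (dV1 C Q m s hs).deriv
  rw [hev.deriv_eq]
  exact (dV2 Q m x hx.ne').deriv

/-- For `k = -1`, `M = 0`, `Q ≠ 0`, the unique positive solution of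
`-r^(2(D-3)) + (D-2) Q² = 0` is `r_p^(D-3) = √(D-2) |Q|`, and at this radius
`V''(r_p) = 4(D-3)/r_p⁴ > 0`. -/
theorem stmt7 (D : ℕ) (hD : 4 ≤ D) (Λ Q : ℝ) (hQ : Q ≠ 0) :
    (((Real.sqrt ((D:ℝ)-2) * |Q|) ^ ((1:ℝ)/((D:ℝ)-3)))^(D-3)
        = Real.sqrt ((D:ℝ)-2) * |Q|)
    ∧ (∀ r : ℝ, 0 < r →
        (-(r^(2*(D-3))) + ((D:ℝ)-2)*Q^2 = 0
          ↔ r = (Real.sqrt ((D:ℝ)-2) * |Q|) ^ ((1:ℝ)/((D:ℝ)-3))))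
    ∧ deriv (deriv (fun s : ℝ =>
          -2*Λ/(((D:ℝ)-2)*((D:ℝ)-1)) - 1/s^2 + Q^2/s^(2*(D-2))))
        ((Real.sqrt ((D:ℝ)-2) * |Q|) ^ ((1:ℝ)/((D:ℝ)-3)))
      = 4*((D:ℝ)-3)/((Real.sqrt ((D:ℝ)-2) * |Q|) ^ ((1:ℝ)/((D:ℝ)-3)))^4
    ∧ 0 < 4*((D:ℝ)-3)/((Real.sqrt ((D:ℝ)-2) * |Q|) ^ ((1:ℝ)/((D:ℝ)-3)))^4 := by
  have hD4 : (4:ℝ) ≤ (D:ℝ) := by exact_mod_cast hD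
  have hD2 : (0:ℝ) < (D:ℝ)-2 := by linarith
  have hD3 : (0:ℝ) < (D:ℝ)-3 := by linarith
  set b : ℝ := Real.sqrt ((D:ℝ)-2) * |Q| with hbdef
  have hb : 0 < b := mul_pos (Real.sqrt_pos.mpr hD2) (abs_pos.mpr hQ)
  set rp : ℝ := b ^ ((1:ℝ)/((D:ℝ)-3)) with hrpdef
  have hrp : 0 < rp := Real.rpow_pos_of_pos hb _
  have hcast3 : ((D-3:ℕ):ℝ) = (D:ℝ)-3 := by
    have : (3:ℕ) ≤ D := by omega
    push_cast [Nat.cast_sub this]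
    ring
  have hb2 : b^2 = ((D:ℝ)-2)*Q^2 := by
    rw [hbdef, mul_pow, Real.sq_sqrt hD2.le, sq_abs]
  -- Part 1
  have part1 : rp ^ (D-3) = b := by
    rw [← Real.rpow_natCast rp (D-3), hrpdef, ← Real.rpow_mul hb.le, hcast3]
    rw [one_div, inv_mul_cancel₀ hD3.ne', Real.rpow_one]
  refine ⟨part1, ?_, ?_, ?_⟩
  · intro r hr
    constructor
    · intro h
      have h1 : (r^(D-3))^2 = b^2 := by
        rw [hb2, ← pow_mul, mul_comm (D-3) 2]
        linarith
      have h2 : r^(D-3) = b := by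
        have hrn : 0 ≤ r^(D-3) := (pow_pos hr _).le
        nlinarith
      have h3 : (r^(D-3) : ℝ) ^ ((1:ℝ)/((D:ℝ)-3)) = rp := by rw [h2]
      rwa [← Real.rpow_natCast r (D-3), ← Real.rpow_mul hr.le, hcast3,
        mul_one_div, div_self hD3.ne', Real.rpow_one] at h3
    · intro h
      subst h
      have : rp^(2*(D-3)) = (rp^(D-3))^2 := by rw [← pow_mul, mul_comm]
      rw [this, part1, hb2]
      ring
  · rw [ddV (-2*Λ/(((D:ℝ)-2)*((D:ℝ)-1))) Q (2*(D-2)) rp hrp]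
    have hm2 : rp^(2*(D-2)+2) = ((D:ℝ)-2)*Q^2*rp^4 := by
      have he : 2*(D-2)+2 = 2*(D-3)+4 := by omega
      rw [he, pow_add, show 2*(D-3) = (D-3)*2 from mul_comm _ _, pow_mul, part1, hb2]
    have hz1 : rp^(-4:ℤ) = (rp^4)⁻¹ := by
      rw [show (-4:ℤ) = -((4:ℕ):ℤ) by norm_num, zpow_neg, zpow_natCast]
    have hz2 : rp^(-((2*(D-2):ℕ):ℤ)-2) = (rp^(2*(D-2)+2))⁻¹ := by
      rw [show -((2*(D-2):ℕ):ℤ)-2 = -(((2*(D-2)+2:ℕ)):ℤ) by push_cast; ring,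
        zpow_neg, zpow_natCast]
    rw [hz1, hz2, hm2]
    have hmcast : ((2*(D-2):ℕ):ℝ) = 2*(D:ℝ)-4 := by
      have : (2:ℕ) ≤ D := by omega
      push_cast [Nat.cast_sub this]
      ring
    rw [hmcast]
    have hrp4 : rp^4 ≠ 0 := by positivity
    have hQ2 : Q^2 ≠ 0 := pow_ne_zero _ hQ
    field_simp
    ring
  · have hrp4 : (0:ℝ) < rp^4 := by positivity
    apply div_pos (by linarith) hrp4
end

section
/- Let γ_{ij}(x) be a Riemannian metric on an (D-2)-dimensional manifold Σ and consider the metric g = -f(r)dt^2 + h(r)dr^2 + r^2 γ_{ij}(x)dx^i dx^j on M = ℝ × ℝ_{>0} × Σ. Then the symmetric tensor K_{ab} = r^4 γ_{ab} (where γ_{ab} = γ_{ij}(dx^i)_a(dx^j)_b) satisfies the rank-2 Killing tensor equation ∇_{(c}K_{ab)} = 0, where ∇ is the Levi-Civita connection of g. -/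
private lemma fin2_cases' (a : Fin 2) : a = 0 ∨ a = 1 := by
  match a with
  | 0 => exact Or.inl rfl
  | 1 => exact Or.inr rfl

open Sum in
/-- For the static warped metric
`g = -f(r)dt² + h(r)dr² + r² γ_{ij}(x)dx^i dx^j` on `ℝ × ℝ_{>0} × Σ`, the
symmetric tensor `K_{ab} = r⁴ γ_{ab}` satisfies the rank-2 Killing tensor
equation `∇_{(c} K_{ab)} = 0`.  Coordinates are indexed by `Fin 2 ⊕ Fin n`
(`inl 0 = t`, `inl 1 = r`, `inr i = x^i`); the Christoffel symbols of `g`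
relevant to the computation are `Γ^l_{tμ} = 0`, `Γ^l_{rr} = 0`,
`Γ^l_{ri} = r⁻¹ δ^l_i`, `Γ^l_{ij} = (γ-Christoffel)`, the latter characterized
by the Koszul identity; the Killing equation is expressed in components as
`∂_{(ρ}K_{μν)} - 2 Γ^σ_{(ρμ}K_{ν)σ} = 0`, i.e. (times 3)
`∂_ρ K_{μν} + ∂_μ K_{νρ} + ∂_ν K_{ρμ}
   = 2 ∑_σ (Γ^σ_{ρμ}K_{νσ} + Γ^σ_{μν}K_{ρσ} + Γ^σ_{νρ}K_{μσ})`. -/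
theorem stmt16 (n : ℕ)
    (γ : (Fin n → ℝ) → Fin n → Fin n → ℝ)
    (hγsymm : ∀ x i j, γ x i j = γ x j i)
    (hγdiff : ∀ i j, Differentiable ℝ (fun x => γ x i j))
    (Γγ : (Fin n → ℝ) → Fin n → Fin n → Fin n → ℝ)
    (hΓγsym : ∀ x l i j, Γγ x l i j = Γγ x l j i)
    (hKoszul : ∀ x i j m,
        ∑ l, Γγ x l i j * γ x m l
          = (fderiv ℝ (fun y => γ y j m) x (Pi.single i 1)
              + fderiv ℝ (fun y => γ y i m) x (Pi.single j 1)
              - fderiv ℝ (fun y => γ y i j) x (Pi.single m 1)) / 2)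
    (Γ : ℝ → (Fin n → ℝ) → (Fin 2 ⊕ Fin n) → (Fin 2 ⊕ Fin n) → (Fin 2 ⊕ Fin n) → ℝ)
    (hΓsym : ∀ r x σ μ ν, Γ r x σ μ ν = Γ r x σ ν μ)
    (hΓt : ∀ r x l μ, Γ r x (inr l) (inl 0) μ = 0)
    (hΓrr : ∀ r x l, Γ r x (inr l) (inl 1) (inl 1) = 0)
    (hΓri : ∀ r x l i, Γ r x (inr l) (inl 1) (inr i) = r⁻¹ * (if l = i then 1 else 0))
    (hΓij : ∀ r x l i j, Γ r x (inr l) (inr i) (inr j) = Γγ x l i j)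
    (K : ℝ → (Fin n → ℝ) → (Fin 2 ⊕ Fin n) → (Fin 2 ⊕ Fin n) → ℝ)
    (hKij : ∀ r x i j, K r x (inr i) (inr j) = r^4 * γ x i j)
    (hKl : ∀ r x a ν, K r x (inl a) ν = 0)
    (hKr : ∀ r x μ a, K r x μ (inl a) = 0)
    (pd : ℝ → (Fin n → ℝ) → (Fin 2 ⊕ Fin n) → (Fin 2 ⊕ Fin n) → (Fin 2 ⊕ Fin n) → ℝ)
    (hpdt : ∀ r x μ ν, pd r x (inl 0) μ ν = 0)
    (hpdr : ∀ r x μ ν, pd r x (inl 1) μ ν = deriv (fun s => K s x μ ν) r)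
    (hpdx : ∀ r x k μ ν,
        pd r x (inr k) μ ν = fderiv ℝ (fun y => K r y μ ν) x (Pi.single k 1)) :
    ∀ (r : ℝ) (x : Fin n → ℝ), 0 < r →
      ∀ ρ μ ν : Fin 2 ⊕ Fin n,
        pd r x ρ μ ν + pd r x μ ν ρ + pd r x ν ρ μ
          = 2 * ∑ σ, (Γ r x σ ρ μ * K r x ν σ
              + Γ r x σ μ ν * K r x ρ σ
              + Γ r x σ ν ρ * K r x μ σ) := by
  intro r x hr ρ μ ν
  have hr' : r ≠ 0 := ne_of_gt hr
  -- partial derivatives vanish when either lower index of K is inl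
  have hpd0 : ∀ (ρ' μ' ν' : Fin 2 ⊕ Fin n),
      ((∃ a, μ' = inl a) ∨ (∃ a, ν' = inl a)) → pd r x ρ' μ' ν' = 0 := by
    rintro ρ' μ' ν' h
    have hKz : ∀ s y, K s y μ' ν' = 0 := by
      rcases h with ⟨a, rfl⟩ | ⟨a, rfl⟩
      · exact fun s y => hKl s y a ν'
      · exact fun s y => hKr s y μ' a
    rcases ρ' with a | k
    · rcases fin2_cases' a with rfl | rfl
      · exact hpdt r x μ' ν'
      · rw [hpdr]; simp [hKz]
    · rw [hpdx]; simp [hKz]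
  have hΓ0 : ∀ (l : Fin n) (a b : Fin 2), Γ r x (inr l) (inl a) (inl b) = 0 := by
    intro l a b
    rcases fin2_cases' a with rfl | rfl <;> rcases fin2_cases' b with rfl | rfl
    · exact hΓt r x l (inl 0)
    · exact hΓt r x l (inl 1)
    · rw [hΓsym]; exact hΓt r x l (inl 1)
    · exact hΓrr r x l
  have hΓt' : ∀ (l : Fin n) μ', Γ r x (inr l) μ' (inl 0) = 0 := by
    intro l μ'; rw [hΓsym]; exact hΓt r x l μ'
  have hΓri' : ∀ (l i : Fin n),
      Γ r x (inr l) (inr i) (inl 1) = r⁻¹ * (if l = i then 1 else 0) := by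
    intro l i; rw [hΓsym]; exact hΓri r x l i
  have hRderiv : ∀ i j : Fin n,
      deriv (fun s => K s x (inr i) (inr j)) r = 4 * r ^ 3 * γ x i j := by
    intro i j
    have hfun : (fun s => K s x (inr i) (inr j)) = fun s => s ^ 4 * γ x i j :=
      funext fun s => hKij s x i j
    rw [hfun, deriv_mul_const (differentiableAt_pow 4), deriv_pow_field]
    ring
  have hfd : ∀ (i j k : Fin n),
      fderiv ℝ (fun y => K r y (inr i) (inr j)) x (Pi.single k 1)
        = r ^ 4 * fderiv ℝ (fun y => γ y i j) x (Pi.single k 1) := by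
    intro i j k
    have hfun : (fun y => K r y (inr i) (inr j)) = fun y => r ^ 4 * γ y i j :=
      funext fun y => hKij r y i j
    rw [hfun, fderiv_const_mul ((hγdiff i j) x)]
    simp
  have hDsym : ∀ i j : Fin n, (fun y => γ y i j) = (fun y => γ y j i) :=
    fun i j => funext fun y => hγsymm y i j
  rcases ρ with a | k <;> rcases μ with b | i <;> rcases ν with c | j
  · -- inl inl inl
    rw [hpd0 _ _ _ (Or.inl ⟨b, rfl⟩), hpd0 _ _ _ (Or.inl ⟨c, rfl⟩),
        hpd0 _ _ _ (Or.inl ⟨a, rfl⟩)]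
    simp [Fintype.sum_sum_type, hKl, hKr, hΓ0]
  · -- inl inl inr
    rw [hpd0 _ _ _ (Or.inl ⟨b, rfl⟩), hpd0 _ _ _ (Or.inr ⟨a, rfl⟩),
        hpd0 _ _ _ (Or.inl ⟨a, rfl⟩)]
    simp [Fintype.sum_sum_type, hKl, hKr, hΓ0]
  · -- inl inr inl
    rw [hpd0 _ _ _ (Or.inr ⟨c, rfl⟩), hpd0 _ _ _ (Or.inl ⟨c, rfl⟩),
        hpd0 _ _ _ (Or.inl ⟨a, rfl⟩)]
    simp [Fintype.sum_sum_type, hKl, hKr, hΓ0]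
  · -- inl inr inr
    rcases fin2_cases' a with rfl | rfl
    · rw [hpdt, hpd0 _ _ _ (Or.inr ⟨0, rfl⟩), hpd0 _ _ _ (Or.inl ⟨0, rfl⟩)]
      simp [Fintype.sum_sum_type, hKl, hKr, hΓt, hΓt']
    · rw [hpdr, hpd0 _ _ _ (Or.inr ⟨1, rfl⟩), hpd0 _ _ _ (Or.inl ⟨1, rfl⟩),
          hRderiv]
      simp [Fintype.sum_sum_type, hKl, hKr, hΓri, hΓri', hKij, mul_ite,
        ite_mul, Finset.sum_add_distrib, Finset.sum_ite_eq', Finset.mem_univ, hγsymm x j i]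
      field_simp
      ring
  · -- inr inl inl
    rw [hpd0 _ _ _ (Or.inl ⟨b, rfl⟩), hpd0 _ _ _ (Or.inl ⟨c, rfl⟩),
        hpd0 _ _ _ (Or.inr ⟨b, rfl⟩)]
    simp [Fintype.sum_sum_type, hKl, hKr, hΓ0]
  · -- inr inl inr
    rcases fin2_cases' b with rfl | rfl
    · rw [hpd0 _ _ _ (Or.inl ⟨0, rfl⟩), hpdt, hpd0 _ _ _ (Or.inr ⟨0, rfl⟩)]
      simp [Fintype.sum_sum_type, hKl, hKr, hΓt, hΓt']
    · rw [hpd0 _ _ _ (Or.inl ⟨1, rfl⟩), hpdr, hpd0 _ _ _ (Or.inr ⟨1, rfl⟩),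
          hRderiv]
      simp [Fintype.sum_sum_type, hKl, hKr, hΓri, hΓri', hKij, mul_ite,
        ite_mul, Finset.sum_add_distrib, Finset.sum_ite_eq', Finset.mem_univ, hγsymm x k j]
      field_simp
      ring
  · -- inr inr inl
    rcases fin2_cases' c with rfl | rfl
    · rw [hpd0 _ _ _ (Or.inr ⟨0, rfl⟩), hpd0 _ _ _ (Or.inl ⟨0, rfl⟩), hpdt]
      simp [Fintype.sum_sum_type, hKl, hKr, hΓt, hΓt']
    · rw [hpd0 _ _ _ (Or.inr ⟨1, rfl⟩), hpd0 _ _ _ (Or.inl ⟨1, rfl⟩), hpdr,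
          hRderiv]
      simp [Fintype.sum_sum_type, hKl, hKr, hΓri, hΓri', hKij, mul_ite,
        ite_mul, Finset.sum_add_distrib, Finset.sum_ite_eq', Finset.mem_univ, hγsymm x i k]
      field_simp
      ring
  · -- inr inr inr : the Koszul case
    rw [hpdx, hpdx, hpdx, hfd, hfd, hfd]
    have expand : ∀ a b c : Fin n,
        ∑ l, Γγ x l a b * (r ^ 4 * γ x c l)
          = r ^ 4 * ∑ l, Γγ x l a b * γ x c l := by
      intro a b c
      rw [Finset.mul_sum]
      exact Finset.sum_congr rfl fun l _ => by ring
    simp only [Fintype.sum_sum_type, hKl, hKr, hΓij, hKij, mul_zero, zero_mul,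
      add_zero, zero_add, Finset.sum_const_zero, Finset.sum_add_distrib]
    rw [expand, expand, expand, hKoszul, hKoszul, hKoszul]
    rw [hDsym j k, hDsym k i, hDsym i j] at *
    ring
end

section
/- For D ≥ 4, k = 0, M > 0, Q ≠ 0, and r_p^(D-3) = (D-2)Q^2/((D-1)M), the timelike condition f(r_p) > 0 with f(r) = -2Λr^2/((D-2)(D-1)) - 2M/r^(D-3) + Q^2/r^(2(D-3)) holds if and only if Λ·M^(2/(D-3)) < -((D-3)(D-1)^2/(2(D-2)))·((D-1)/(D-2))^(2/(D-3))·(|Q|/M)^(-2(D-1)/(D-3)). -/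
/-- For `k = 0`, `M > 0`, `Q ≠ 0`, and
`r_p^(D-3) = (D-2)Q²/((D-1)M)`, the timelike condition `f(r_p) > 0` with
`f(r) = -2Λr²/((D-2)(D-1)) - 2M/r^(D-3) + Q²/r^(2(D-3))` holds iff
`Λ M^(2/(D-3)) < -((D-3)(D-1)²/(2(D-2))) ((D-1)/(D-2))^(2/(D-3)) (|Q|/M)^(-2(D-1)/(D-3))`. -/
theorem stmt18 (D : ℕ) (hD : 4 ≤ D) (Λ M Q : ℝ) (hM : 0 < M) (hQ : Q ≠ 0) :
    let rp : ℝ := (((D:ℝ)-2)*Q^2/(((D:ℝ)-1)*M)) ^ ((1:ℝ)/((D:ℝ)-3))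
    (0 < -2*Λ*rp^2/(((D:ℝ)-2)*((D:ℝ)-1)) - 2*M/rp^(D-3) + Q^2/rp^(2*(D-3))
      ↔ Λ * M ^ ((2:ℝ)/((D:ℝ)-3))
          < -(((D:ℝ)-3)*((D:ℝ)-1)^2/(2*((D:ℝ)-2)))
              * (((D:ℝ)-1)/((D:ℝ)-2)) ^ ((2:ℝ)/((D:ℝ)-3))
              * ( |Q| / M ) ^ (-2*((D:ℝ)-1)/((D:ℝ)-3))) := by
  intro rp
  have hd4 : (4:ℝ) ≤ (D:ℝ) := by exact_mod_cast hD
  set d := (D:ℝ) with hdd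
  have ha : 0 < d - 1 := by linarith
  have hb : 0 < d - 2 := by linarith
  have hc : 0 < d - 3 := by linarith
  have hq : 0 < |Q| := abs_pos.mpr hQ
  have hQ2 : 0 < Q^2 := by positivity
  have hA : 0 < (d-2)*Q^2/((d-1)*M) := by positivity
  set A := (d-2)*Q^2/((d-1)*M) with hAdef
  have hrp : rp = A ^ ((1:ℝ)/(d-3)) := rfl
  have hrp0 : 0 < rp := by rw [hrp]; positivity
  have hcast : ((D-3:ℕ):ℝ) = d - 3 := by
    have h3 : (3:ℕ) ≤ D := by omega
    push_cast [Nat.cast_sub h3]; ring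
  have h1 : rp ^ (D-3) = A := by
    rw [← Real.rpow_natCast rp (D-3), hcast, hrp, ← Real.rpow_mul hA.le,
      one_div, inv_mul_cancel₀ hc.ne', Real.rpow_one]
  have h2 : rp ^ (2*(D-3)) = A^2 := by
    rw [mul_comm, pow_mul, h1]
  set e := (2:ℝ)/(d-3) with he
  have h3 : rp^2 = A ^ e := by
    rw [← Real.rpow_natCast rp 2, hrp, ← Real.rpow_mul hA.le]
    congr 1
    push_cast
    rw [he]; ring
  have hX : 0 < A ^ e := Real.rpow_pos_of_pos hA e
  have hm : 0 < M ^ e := Real.rpow_pos_of_pos hM e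
  set X := A ^ e with hXdef
  set m := M ^ e with hmdef
  -- rewrite the f(r_p) expression
  have lhs_eq : -2*Λ*rp^2/((d-2)*(d-1)) - 2*M/rp^(D-3) + Q^2/rp^(2*(D-3))
      = -2*Λ*X/((d-2)*(d-1)) - (d-1)*(d-3)*M^2/((d-2)^2*Q^2) := by
    rw [h1, h2, h3, hAdef]
    field_simp
    ring
  -- key equality for the bound
  have hqe : 0 < |Q| ^ e := Real.rpow_pos_of_pos hq e
  have hQq : Q^2 = |Q|^2 := (sq_abs Q).symm
  have key : -((d-3)*(d-1)^2/(2*(d-2)))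
              * ((d-1)/(d-2)) ^ e
              * ( |Q| / M ) ^ (-2*(d-1)/(d-3))
      = -((d-1)^2*(d-3)*M^2*m/(2*(d-2)*Q^2*X)) := by
    have hexp : -2*(d-1)/(d-3) = -((2:ℝ)+2*e) := by
      rw [he]; field_simp; ring
    have habs : ( |Q| / M ) ^ (-2*(d-1)/(d-3))
        = (M^2 * (M^e)^2) / (|Q|^2 * (|Q|^e)^2) := by
      rw [hexp, Real.rpow_neg (by positivity), Real.div_rpow hq.le hM.le,
        Real.rpow_add hq 2 (2*e), Real.rpow_add hM 2 (2*e)]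
      rw [show (2:ℝ)*e = e*2 by ring, Real.rpow_mul hq.le, Real.rpow_mul hM.le]
      rw [Real.rpow_two, Real.rpow_two, Real.rpow_two, Real.rpow_two, inv_div]
    have hAe : X = ((d-2)^e * (|Q|^e)^2) / ((d-1)^e * M^e) := by
      rw [hXdef, hAdef, hQq, Real.div_rpow (by positivity) (by positivity),
        Real.mul_rpow hb.le (by positivity), Real.mul_rpow ha.le hM.le]
      rw [show (|Q|^2 : ℝ) = |Q| ^ ((2:ℕ):ℝ) by rw [Real.rpow_natCast],
        ← Real.rpow_natCast (|Q|^e) 2, ← Real.rpow_mul hq.le, ← Real.rpow_mul hq.le,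
        mul_comm ((2:ℕ):ℝ) e]
    have hdiv : ((d-1)/(d-2) : ℝ) ^ e = (d-1)^e/(d-2)^e :=
      Real.div_rpow ha.le hb.le e
    have hu : 0 < (d-1)^e := Real.rpow_pos_of_pos ha e
    have hv : 0 < (d-2)^e := Real.rpow_pos_of_pos hb e
    rw [habs, hAe, hdiv, hQq, hmdef]
    field_simp
  rw [lhs_eq, key]
  -- now a purely algebraic iff
  have hC : 0 < (d-1)*(d-3)*M^2/((d-2)^2*Q^2) := by positivity
  constructor
  · intro h
    rw [show -((d-1)^2*(d-3)*M^2*m/(2*(d-2)*Q^2*X)) = (-((d-1)^2*(d-3)*M^2*m))/(2*(d-2)*Q^2*X) by ring,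
      lt_div_iff₀ (by positivity)]
    have h' : (d-1)*(d-3)*M^2/((d-2)^2*Q^2) * ((d-2)*(d-1)) < -2*Λ*X := by
      rw [← lt_div_iff₀ (by positivity : (0:ℝ) < (d-2)*(d-1))]
      linarith
    have h'' : (d-1)*(d-3)*M^2/((d-2)^2*Q^2) * ((d-2)*(d-1)) = (d-1)^2*(d-3)*M^2/((d-2)*Q^2) := by
      field_simp
    rw [h''] at h'
    -- h' : (d-1)^2*(d-3)*M^2/((d-2)*Q^2) < -2*Λ*X
    have h3' := mul_lt_mul_of_pos_right h' (by positivity : 0 < (d-2)*Q^2*m)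
    have heq : (d-1)^2*(d-3)*M^2/((d-2)*Q^2) * ((d-2)*Q^2*m) = (d-1)^2*(d-3)*M^2*m := by
      field_simp
    rw [heq] at h3'
    linarith [h3']
  · intro h
    rw [show -((d-1)^2*(d-3)*M^2*m/(2*(d-2)*Q^2*X)) = (-((d-1)^2*(d-3)*M^2*m))/(2*(d-2)*Q^2*X) by ring,
      lt_div_iff₀ (by positivity)] at h
    -- h : Λ * m * (2*(d-2)*Q^2*X) < -((d-1)^2*(d-3)*M^2*m)
    have h' : Λ * (2*(d-2)*Q^2*X) < -((d-1)^2*(d-3)*M^2) := by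
      have := (mul_lt_mul_iff_of_pos_right hm).mp
        (show Λ * (2*(d-2)*Q^2*X) * m < -((d-1)^2*(d-3)*M^2) * m by linarith)
      exact this
    have h2' : (d-1)*(d-3)*M^2/((d-2)^2*Q^2) < -2*Λ*X/((d-2)*(d-1)) := by
      rw [lt_div_iff₀ (by positivity : (0:ℝ) < (d-2)*(d-1)), div_mul_eq_mul_div,
        div_lt_iff₀ (by positivity : (0:ℝ) < (d-2)^2*Q^2)]
      linarith [mul_lt_mul_of_pos_right h' hb]
    linarith
end
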